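/- Let H(t)=tanh(t/√2), W''(s)=3s²-1, and let J be the bounded odd solution of J'' = W''(H)J + tH' with J(0)=0. Then ∫_{-∞}^{∞} W'''(H(t)) J(t) H'(t)² dt = -(1/2) ∫_{-∞}^{∞} H'(t)² dt, i.e. it equals -h₀/2 where h₀ = ∫ H'². -/

import Mathlib

open Real MeasureTheory Filter Set Topology

lemma my_tanh_sq (x : ℝ) : 1 - Real.tanh x ^ 2 = 1 / Real.cosh x ^ 2 := by
  rw [Real.tanh_eq_sinh_div_cosh, div_pow]
  have h := Real.cosh_sq_sub_sinh_sq x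
  have hc := Real.cosh_pos x
  field_simp
  linarith

lemma my_hasDerivAt_tanh (x : ℝ) : HasDerivAt Real.tanh (1 - Real.tanh x ^ 2) x := by
  have he : Real.tanh = fun y => Real.sinh y / Real.cosh y :=
    funext fun y => Real.tanh_eq_sinh_div_cosh y
  have h : HasDerivAt (fun y => Real.sinh y / Real.cosh y)
      ((Real.cosh x * Real.cosh x - Real.sinh x * Real.sinh x) / Real.cosh x ^ 2) x :=
    (Real.hasDerivAt_sinh x).div (Real.hasDerivAt_cosh x) (Real.cosh_pos x).ne'
  have hone : Real.cosh x * Real.cosh x - Real.sinh x * Real.sinh x = 1 := by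
    nlinarith [Real.cosh_sq_sub_sinh_sq x]
  have hval : (1 - Real.tanh x ^ 2)
      = (Real.cosh x * Real.cosh x - Real.sinh x * Real.sinh x) / Real.cosh x ^ 2 := by
    rw [my_tanh_sq, hone]
  rw [hval, he]
  exact h

lemma my_abs_tanh_le (x : ℝ) : |Real.tanh x| ≤ 1 := by
  rw [← sq_le_one_iff_abs_le_one]
  have h := my_tanh_sq x
  have : (0:ℝ) < 1 / Real.cosh x ^ 2 := by positivity
  linarith

lemma my_cosh_ge (x : ℝ) : Real.exp |x| / 2 ≤ Real.cosh x := by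
  rw [Real.cosh_eq]
  rcases abs_cases x with ⟨h, _⟩ | ⟨h, _⟩ <;> rw [h] <;>
    nlinarith [Real.exp_pos x, Real.exp_pos (-x), Real.add_one_le_exp (x + x),
      Real.add_one_le_exp (-(x+x)), Real.exp_pos (x+x), Real.exp_pos (-(x+x))]

lemma my_sech_le (x : ℝ) : 1 / Real.cosh x ^ 2 ≤ 4 * Real.exp (-(2 * |x|)) := by
  have h := my_cosh_ge x
  have hc := Real.cosh_pos x
  have he : Real.exp (-(2*|x|)) * Real.exp |x| ^ 2 = 1 := by
    rw [sq, ← Real.exp_add, ← Real.exp_add, show -(2*|x|)+(|x|+|x|) = 0 by ring, Real.exp_zero]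
  rw [div_le_iff₀ (by positivity)]
  have h2 : Real.exp |x| ^ 2 / 4 ≤ Real.cosh x ^ 2 := by nlinarith [Real.exp_pos |x|]
  nlinarith [Real.exp_pos |x|, Real.exp_pos (-(2*|x|)),
    mul_le_mul_of_nonneg_left h2 (Real.exp_pos (-(2*|x|))).le]

lemma my_integrable_exp_neg_abs {b : ℝ} (hb : 0 < b) :
    Integrable (fun t : ℝ => Real.exp (-(b * |t|))) := by
  have h1 : IntegrableOn (fun t : ℝ => Real.exp (-(b * |t|))) (Ioi 0) := by
    refine (exp_neg_integrableOn_Ioi 0 hb).congr_fun ?_ measurableSet_Ioi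
    intro t ht
    simp [abs_of_pos (show (0:ℝ) < t from ht), neg_mul]
  rw [← integrableOn_univ, ← Set.Iio_union_Ici (a := (0:ℝ)), integrableOn_union,
    integrableOn_Ici_iff_integrableOn_Ioi]
  refine ⟨?_, h1⟩
  rw [← (Measure.measurePreserving_neg (volume : Measure ℝ)).integrableOn_comp_preimage
      (Homeomorph.neg ℝ).measurableEmbedding]
  simp only [Function.comp_def, abs_neg, neg_preimage, neg_Iio, neg_zero]
  exact h1

theorem jacobi_cubic_identity
    (H : ℝ → ℝ) (hH : H = fun t => Real.tanh (t / Real.sqrt 2))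
    (J : ℝ → ℝ)
    (hJsmooth : ContDiff ℝ 2 J)
    (hJbdd : ∃ M : ℝ, ∀ t, |J t| ≤ M)
    (hJodd : ∀ t : ℝ, J (-t) = -J t)
    (hJ0 : J 0 = 0)
    (hJode : ∀ t : ℝ, deriv (deriv J) t = (3 * (H t) ^ 2 - 1) * J t + t * deriv H t) :
    (∫ t : ℝ, 6 * H t * J t * (deriv H t) ^ 2) = -(1 / 2) * ∫ t : ℝ, (deriv H t) ^ 2 := by
  set s : ℝ := Real.sqrt 2 with hsdef
  have hs0 : (0:ℝ) < s := Real.sqrt_pos.2 (by norm_num)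
  have hs2 : s ^ 2 = 2 := Real.sq_sqrt (by norm_num)
  have hs1 : 1 ≤ s := by nlinarith
  have hsle : s ≤ 2 := by nlinarith
  obtain ⟨M₀, hM₀⟩ := hJbdd
  set M : ℝ := max M₀ 0 with hMdef
  have hM : ∀ t, |J t| ≤ M := fun t => (hM₀ t).trans (le_max_left _ _)
  have hM0 : (0:ℝ) ≤ M := le_max_right _ _
  have hHt : ∀ t, H t = Real.tanh (t / s) := fun t => by rw [hH]
  set u : ℝ → ℝ := fun t => (1 - H t ^ 2) / s with hu_def
  have hU : ∀ t, HasDerivAt H (u t) t := by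
    intro t
    have h1 : HasDerivAt (fun y : ℝ => Real.tanh (y / s))
        ((1 - Real.tanh (t/s) ^ 2) * (1/s)) t := by
      have := (my_hasDerivAt_tanh (t/s)).comp t ((hasDerivAt_id t).div_const s)
      exact this
    rw [hH]
    convert h1 using 1
    rw [hu_def]; simp only []
    rw [hHt t]; ring
  have hderivH : deriv H = u := funext fun t => (hU t).deriv
  have hHabs : ∀ t, |H t| ≤ 1 := fun t => by rw [hHt t]; exact my_abs_tanh_le _
  have hHsq : ∀ t, H t ^ 2 ≤ 1 := fun t => by
    rw [sq_le_one_iff_abs_le_one]; exact hHabs t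
  have hupos : ∀ t, 0 ≤ u t := fun t => div_nonneg (by linarith [hHsq t]) hs0.le
  have hule : ∀ t, u t ≤ 1/s := by
    intro t
    rw [hu_def]; simp only []
    gcongr
    nlinarith [sq_nonneg (H t)]
  have hudecay : ∀ t, u t ≤ (4/s) * Real.exp (-(s * |t|)) := by
    intro t
    have h1 : u t = (1 / Real.cosh (t/s) ^ 2) / s := by
      rw [hu_def]; simp only []; rw [hHt t, my_tanh_sq]
    have h3 : 2 * |t / s| = s * |t| := by
      rw [abs_div, abs_of_pos hs0]
      field_simp
      nlinarith [abs_nonneg t]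
    calc u t = (1 / Real.cosh (t/s) ^ 2) / s := h1
      _ ≤ (4 * Real.exp (-(2 * |t/s|))) / s := by gcongr; exact my_sech_le _
      _ = (4/s) * Real.exp (-(s * |t|)) := by rw [h3]; ring
  have hu2 : ∀ t, u t ^ 2 ≤ 2 * Real.exp (-(s * |t|)) := by
    intro t
    have h1 := hudecay t
    have h2 := hule t
    have h3 := hupos t
    have he := Real.exp_pos (-(s * |t|))
    calc u t ^ 2 ≤ (1/s) * u t := by nlinarith
      _ ≤ (1/s) * ((4/s) * Real.exp (-(s * |t|))) := by
          apply mul_le_mul_of_nonneg_left h1 (by positivity)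
      _ = (4/s^2) * Real.exp (-(s * |t|)) := by ring
      _ = 2 * Real.exp (-(s * |t|)) := by rw [hs2]; norm_num
  have htu : ∀ t, |t| * u t ≤ 2 := by
    intro t
    have h1 := hudecay t
    have h2 : s * |t| ≤ Real.exp (s * |t|) := by
      linarith [Real.add_one_le_exp (s * |t|)]
    have he := Real.exp_pos (s * |t|)
    have hinv : Real.exp (-(s * |t|)) = (Real.exp (s * |t|))⁻¹ := by
      rw [← Real.exp_neg]
    have h4 : |t| * Real.exp (-(s * |t|)) ≤ 1/s := by
      rw [hinv, mul_inv_le_iff₀ he]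
      calc |t| ≤ Real.exp (s * |t|) / s * 1 := by
            rw [mul_one, le_div_iff₀ hs0]; linarith
        _ = 1/s * Real.exp (s * |t|) := by ring
    calc |t| * u t ≤ |t| * ((4/s) * Real.exp (-(s * |t|))) :=
          mul_le_mul_of_nonneg_left h1 (abs_nonneg t)
      _ = (4/s) * (|t| * Real.exp (-(s * |t|))) := by ring
      _ ≤ (4/s) * (1/s) := by
          apply mul_le_mul_of_nonneg_left h4 (by positivity)
      _ = 4/s^2 := by ring
      _ = 2 := by rw [hs2]; norm_num
  -- derivatives of J
  set J1 : ℝ → ℝ := deriv J with hJ1def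
  set J2 : ℝ → ℝ := deriv J1 with hJ2def
  have hJdiff : ∀ t, HasDerivAt J (J1 t) t := fun t =>
    ((hJsmooth.differentiable (by norm_num)) t).hasDerivAt
  have hJ1cd : ContDiff ℝ 1 J1 := by
    rw [hJ1def]
    have h2 : ContDiff ℝ ((1:ℕ) + 1) J := by exact_mod_cast hJsmooth
    exact (contDiff_succ_iff_deriv.mp h2).2.2
  have hJ1diff : ∀ t, HasDerivAt J1 (J2 t) t := fun t =>
    ((hJ1cd.differentiable (by norm_num)) t).hasDerivAt
  have hJ2eq : J2 = fun t => (3 * H t ^ 2 - 1) * J t + t * u t :=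
    funext fun t => by rw [hJode t, hderivH]
  -- derivative of u
  set P : ℝ → ℝ := fun t => -(2 * (H t * u t)) / s with hPdef
  have hU' : ∀ t, HasDerivAt u (P t) t := by
    intro t
    have h := (((hU t).pow 2).const_sub 1).div_const s
    rw [hu_def]
    refine h.congr_deriv ?_
    rw [hPdef]; simp only []
    push_cast; ring
  have hPabs : ∀ t, |P t| ≤ s * u t := by
    intro t
    rw [hPdef]; simp only []
    rw [abs_div, abs_of_pos hs0, abs_neg, abs_mul, abs_mul, abs_of_nonneg (hupos t)]
    rw [div_le_iff₀ hs0]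
    have h1 : |(2:ℝ)| = 2 := by norm_num
    rw [h1]
    nlinarith [hs2, mul_le_mul_of_nonneg_right (hHabs t) (hupos t), hupos t]
  have hP' : ∀ t, HasDerivAt P (-(2 * (u t * u t + H t * P t)) / s) t := by
    intro t
    have h := (((hU t).mul (hU' t)).const_mul 2).neg.div_const s
    rw [hPdef]
    exact h
  have hPval : ∀ t, -(2 * (u t * u t + H t * P t)) / s = (3 * H t ^ 2 - 1) * u t := by
    intro t
    rw [hPdef, hu_def]; simp only []
    have h0 := hs0.ne'
    field_simp
    linear_combination (3*H t^4 - 4*H t^2 + 1) * hs2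
  have hP'2 : ∀ t, HasDerivAt P ((3 * H t ^ 2 - 1) * u t) t := fun t => hPval t ▸ hP' t
  have hJ2' : ∀ t, HasDerivAt J2
      (6 * H t * u t * J t + (3 * H t ^ 2 - 1) * J1 t + (u t + t * P t)) t := by
    intro t
    rw [hJ2eq]
    have h := ((((hU t).pow 2).const_mul 3).sub_const 1).mul (hJdiff t) |>.add
      ((hasDerivAt_id' (x := t)).mul (hU' t))
    refine h.congr_deriv ?_
    push_cast [Pi.pow_apply]; ring
  -- the function F and its derivative
  set F : ℝ → ℝ := fun t => J2 t * u t - J1 t * P t - t * u t ^ 2 / 2 with hFdef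
  set g : ℝ → ℝ := fun t => 6 * H t * J t * u t ^ 2 + u t ^ 2 / 2 with hgdef
  have hF' : ∀ t, HasDerivAt F (g t) t := by
    intro t
    have h := (((hJ2' t).mul (hU' t)).sub ((hJ1diff t).mul (hP'2 t))).sub
      (((hasDerivAt_id' (x := t)).mul ((hU' t).pow 2)).div_const 2)
    rw [hFdef, hgdef]
    refine h.congr_deriv ?_
    push_cast [Pi.pow_apply]; ring
  -- bounds on J2 and J1
  have hJ2bd : ∀ t, |J2 t| ≤ 2*M + 2 := by
    intro t
    rw [hJ2eq]; simp only []
    have h1 : |(3 * H t ^ 2 - 1) * J t| ≤ 2 * M := by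
      rw [abs_mul]
      have hb : |3 * H t ^ 2 - 1| ≤ 2 := by
        rw [abs_le]; constructor <;> nlinarith [sq_nonneg (H t), hHsq t]
      exact mul_le_mul hb (hM t) (abs_nonneg _) (by norm_num)
    have h2 : |t * u t| ≤ 2 := by
      rw [abs_mul, abs_of_nonneg (hupos t)]; exact htu t
    calc |(3 * H t ^ 2 - 1) * J t + t * u t|
        ≤ |(3 * H t ^ 2 - 1) * J t| + |t * u t| := abs_add_le _ _
      _ ≤ 2*M + 2 := add_le_add h1 h2
  set A : ℝ := |J1 0| with hAdef
  have hA0 : 0 ≤ A := abs_nonneg _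
  have hJ1bd : ∀ t, |J1 t| ≤ A + (2*M+2) * |t| := by
    intro t
    have key : ‖J1 t - J1 0‖ ≤ (2*M+2) * ‖t - 0‖ := by
      apply convex_univ.norm_image_sub_le_of_norm_hasDerivWithin_le
        (fun x _ => (hJ1diff x).hasDerivWithinAt) (fun x _ => ?_) (mem_univ 0) (mem_univ t)
      simpa [Real.norm_eq_abs] using hJ2bd x
    rw [Real.norm_eq_abs, Real.norm_eq_abs, sub_zero] at key
    have h1 : |J1 t| ≤ |J1 0| + |J1 t - J1 0| := by
      calc |J1 t| = |J1 0 + (J1 t - J1 0)| := by ring_nf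
        _ ≤ |J1 0| + |J1 t - J1 0| := abs_add_le _ _
    rw [hAdef]; linarith
  -- bound on F
  set K0 : ℝ := (2*M+2) + s*A + s*(2*M+2) + 1 with hK0def
  have hK0pos : 0 ≤ K0 := by positivity
  have hFbd : ∀ t, |F t| ≤ (K0 * (4/s)) * ((1 + |t|) * Real.exp (-(s * |t|))) := by
    intro t
    have step1 : |F t| ≤ |J2 t| * u t + |J1 t| * |P t| + |t| * u t ^ 2 / 2 := by
      rw [hFdef]; simp only []
      have h0 := abs_add_three (J2 t * u t) (-(J1 t * P t)) (-(t * u t ^ 2 / 2))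
      rw [abs_neg, abs_neg] at h0
      have b1 : |J2 t * u t| = |J2 t| * u t := by rw [abs_mul, abs_of_nonneg (hupos t)]
      have b2 : |J1 t * P t| = |J1 t| * |P t| := abs_mul _ _
      have b3 : |t * u t ^ 2 / 2| = |t| * u t ^ 2 / 2 := by
        rw [abs_div, abs_mul, abs_pow, abs_of_nonneg (hupos t)]; norm_num
      rw [b1, b2, b3] at h0
      calc |J2 t * u t - J1 t * P t - t * u t ^ 2 / 2|
          = |J2 t * u t + -(J1 t * P t) + -(t * u t ^ 2 / 2)| := by
            rw [show J2 t * u t - J1 t * P t - t * u t ^ 2 / 2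
              = J2 t * u t + -(J1 t * P t) + -(t * u t ^ 2 / 2) by ring]
        _ ≤ |J2 t| * u t + |J1 t| * |P t| + |t| * u t ^ 2 / 2 := h0
    have hu1 : u t ≤ 1 := (hule t).trans (by rw [div_le_one hs0]; exact hs1)
    have step2 : |t| * u t ^ 2 / 2 ≤ |t| * u t := by
      have h1 := hupos t
      nlinarith [abs_nonneg t, mul_nonneg (abs_nonneg t)
        (mul_nonneg h1 (sub_nonneg.2 hu1)), mul_nonneg (abs_nonneg t) (mul_nonneg h1 h1)]
    have step3 : |J1 t| * |P t| ≤ (A + (2*M+2) * |t|) * (s * u t) := by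
      apply mul_le_mul (hJ1bd t) (hPabs t) (abs_nonneg _)
      positivity
    have step4 : |J2 t| * u t ≤ (2*M+2) * u t :=
      mul_le_mul_of_nonneg_right (hJ2bd t) (hupos t)
    have step3two : |J1 t| * |P t| ≤ s*A*u t + s*(2*M+2)*(|t| * u t) := by
      refine step3.trans (le_of_eq ?_); ring
    have step5 : |F t| ≤ K0 * ((1 + |t|) * u t) := by
      have egoal : K0 * ((1 + |t|) * u t)
          = (2*M+2)*u t + s*A*u t + s*(2*M+2)*u t + u t
            + ((2*M+2)*(|t| * u t) + s*A*(|t| * u t) + s*(2*M+2)*(|t| * u t)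
              + (|t| * u t)) := by
        rw [hK0def]; ring
      have hYn : 0 ≤ |t| * u t := mul_nonneg (abs_nonneg t) (hupos t)
      have hMM : (0:ℝ) ≤ 2*M+2 := by linarith
      have pos1 : 0 ≤ s*(2*M+2)*u t :=
        mul_nonneg (mul_nonneg hs0.le hMM) (hupos t)
      have pos2 : 0 ≤ u t := hupos t
      have pos3 : 0 ≤ (2*M+2)*(|t| * u t) := mul_nonneg hMM hYn
      have pos4 : 0 ≤ s*A*(|t| * u t) := mul_nonneg (mul_nonneg hs0.le hA0) hYn
      linarith [step1, step2, step4, step3two]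
    calc |F t| ≤ K0 * ((1 + |t|) * u t) := step5
      _ ≤ K0 * ((1 + |t|) * ((4/s) * Real.exp (-(s * |t|)))) := by
          apply mul_le_mul_of_nonneg_left ?_ hK0pos
          apply mul_le_mul_of_nonneg_left (hudecay t) (by positivity)
      _ = (K0 * (4/s)) * ((1 + |t|) * Real.exp (-(s * |t|))) := by ring
  -- limits of the comparison function
  have hBtop : Tendsto (fun t : ℝ => (1 + |t|) * Real.exp (-(s * |t|))) atTop (𝓝 0) := by
    have e1 : Tendsto (fun t : ℝ => Real.exp (-(s * t))) atTop (𝓝 0) := by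
      apply Real.tendsto_exp_atBot.comp
      exact tendsto_neg_atTop_atBot.comp (Tendsto.const_mul_atTop hs0 tendsto_id)
    have e2 : Tendsto (fun t : ℝ => t * Real.exp (-(s * t))) atTop (𝓝 0) := by
      have h := tendsto_rpow_mul_exp_neg_mul_atTop_nhds_zero 1 s hs0
      apply h.congr'
      filter_upwards [eventually_gt_atTop (0:ℝ)] with x hx
      rw [Real.rpow_one]; ring_nf
    have h3 := e1.add e2
    rw [add_zero] at h3
    apply h3.congr'
    filter_upwards [eventually_ge_atTop (0:ℝ)] with x hx
    rw [abs_of_nonneg hx]; ring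
  have hBbot : Tendsto (fun t : ℝ => (1 + |t|) * Real.exp (-(s * |t|))) atBot (𝓝 0) := by
    have h := hBtop.comp tendsto_neg_atBot_atTop
    apply h.congr
    intro x; simp [Function.comp, abs_neg]
  have hFtop : Tendsto F atTop (𝓝 0) := by
    have hlim : Tendsto (fun t : ℝ => (K0 * (4/s)) * ((1 + |t|) * Real.exp (-(s * |t|))))
        atTop (𝓝 0) := by
      have := hBtop.const_mul (K0 * (4/s)); rwa [mul_zero] at this
    exact squeeze_zero_norm (fun t => by rw [Real.norm_eq_abs]; exact hFbd t) hlim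
  have hFbot : Tendsto F atBot (𝓝 0) := by
    have hlim : Tendsto (fun t : ℝ => (K0 * (4/s)) * ((1 + |t|) * Real.exp (-(s * |t|))))
        atBot (𝓝 0) := by
      have := hBbot.const_mul (K0 * (4/s)); rwa [mul_zero] at this
    exact squeeze_zero_norm (fun t => by rw [Real.norm_eq_abs]; exact hFbd t) hlim
  -- integrability
  have hHdiff : Differentiable ℝ H := fun t => (hU t).differentiableAt
  have hHcont : Continuous H := hHdiff.continuous
  have hucont : Continuous u := by
    rw [hu_def]
    exact (continuous_const.sub (hHcont.pow 2)).div_const s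
  have hJcont : Continuous J := hJsmooth.continuous
  have hint1 : Integrable (fun t => 6 * H t * J t * u t ^ 2) := by
    apply Integrable.mono' ((my_integrable_exp_neg_abs hs0).const_mul (12*M))
      ((((continuous_const.mul hHcont).mul hJcont).mul (hucont.pow 2)).aestronglyMeasurable)
    filter_upwards with t
    rw [Real.norm_eq_abs]
    have h1 : |6 * H t * J t * u t ^ 2| = 6 * (|H t| * |J t|) * u t ^ 2 := by
      rw [abs_mul, abs_mul, abs_mul, abs_pow, abs_of_nonneg (hupos t),
        abs_of_nonneg (by norm_num : (0:ℝ) ≤ 6)]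
      ring
    show |6 * H t * J t * u t ^ 2| ≤ 12 * M * Real.exp (-(s * |t|))
    rw [h1]
    have h2 : |H t| * |J t| ≤ 1 * M := mul_le_mul (hHabs t) (hM t) (abs_nonneg _) zero_le_one
    rw [one_mul] at h2
    calc 6 * (|H t| * |J t|) * u t ^ 2 ≤ 6 * M * u t ^ 2 := by
          apply mul_le_mul_of_nonneg_right ?_ (sq_nonneg _)
          linarith
      _ ≤ 6 * M * (2 * Real.exp (-(s * |t|))) := by
          apply mul_le_mul_of_nonneg_left (hu2 t) (by positivity)
      _ = 12 * M * Real.exp (-(s * |t|)) := by ring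
  have hint2 : Integrable (fun t => u t ^ 2) := by
    apply Integrable.mono' ((my_integrable_exp_neg_abs hs0).const_mul 2)
      ((hucont.pow 2).aestronglyMeasurable)
    filter_upwards with t
    rw [Real.norm_eq_abs, abs_of_nonneg (sq_nonneg _)]
    exact hu2 t
  have hgint : Integrable g := by
    rw [hgdef]
    exact hint1.add (hint2.div_const 2)
  -- fundamental theorem of calculus on both half-lines
  have hIoi : ∫ t in Ioi (0:ℝ), g t = 0 - F 0 :=
    integral_Ioi_of_hasDerivAt_of_tendsto' (fun x _ => hF' x) hgint.integrableOn hFtop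
  have hIic : ∫ t in Iic (0:ℝ), g t = F 0 - 0 :=
    integral_Iic_of_hasDerivAt_of_tendsto' (fun x _ => hF' x) hgint.integrableOn hFbot
  have htotal : ∫ t, g t = 0 := by
    rw [← intervalIntegral.integral_Iic_add_Ioi hgint.integrableOn hgint.integrableOn, hIoi, hIic]; ring
  have hsplit : ∫ t, g t = (∫ t, 6 * H t * J t * u t ^ 2) + ∫ t, u t ^ 2 / 2 := by
    rw [hgdef]
    exact integral_add hint1 (hint2.div_const 2)
  have hdiv : ∫ t, u t ^ 2 / 2 = (∫ t, u t ^ 2) / 2 := integral_div 2 _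
  rw [hderivH]
  linarith [htotal, hsplit, hdiv]
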